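/- Let n ≥ 2, R > 0, let φ : (0,∞) × ℝ → (0,∞), let P, Q : (0,∞) × ℝ → ℝ be differentiable in their second variable, let σ : (0,R) → (0,∞) be differentiable, and let c : (0,R) → ℝ. For x, y ∈ ℝⁿ with x ≠ 0 and y ≠ 0, write u = |y|, r = |x|, s = ⟨x,y⟩/|y|, define G^i(x,y) = u·P(r,s)·y^i + u²·Q(r,s)·x^i, and define S(x,y) = Σ_{m=1}^n ∂G^m/∂y^m(x,y) − Σ_{m=1}^n y^m ∂/∂x^m[ln σ(|x|)]. Then S(x,y) = (n+1)·c(|x|)·u·φ(r,s) holds for all x in the punctured ball {x : 0 < |x| < R} and all y ≠ 0 if and only if (n+1)·P(r,s) + (r² − s²)·Q_s(r,s) + 2·s·Q(r,s) + f(r)·s = (n+1)·c(r)·φ(r,s) holds for all r ∈ (0,R) and all s ∈ [−r, r], where f(r) = −σ'(r)/(r·σ(r)). -/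

import Mathlib

open scoped RealInnerProductSpace

private lemma aux_norm_hasDeriv {E : Type*} [NormedAddCommGroup E] [InnerProductSpace ℝ E]
    (y v : E) (hy : y ≠ 0) :
    HasDerivAt (fun t : ℝ => ‖y + t • v‖) (⟪y, v⟫ / ‖y‖) 0 := by
  have hy' : (0:ℝ) < ‖y‖ := norm_pos_iff.mpr hy
  have hq : HasDerivAt (fun t : ℝ => ‖y‖^2 + 2*⟪y,v⟫*t + ‖v‖^2*t^2) (2*⟪y,v⟫) 0 := by
    have h1 : HasDerivAt (fun t : ℝ => 2*⟪y,v⟫*t) (2*⟪y,v⟫) 0 := by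
      simpa using (hasDerivAt_id (0:ℝ)).const_mul (2*⟪y,v⟫)
    have h2 : HasDerivAt (fun t : ℝ => ‖v‖^2*t^2) 0 0 := by
      simpa using (hasDerivAt_pow 2 (0:ℝ)).const_mul (‖v‖^2)
    simpa [← add_assoc] using (h1.add h2).const_add (‖y‖^2)
  have hq0 : ‖y‖^2 + 2*⟪y,v⟫*(0:ℝ) + ‖v‖^2*(0:ℝ)^2 ≠ 0 := by
    simpa using (pow_pos hy' 2).ne'
  have hs := (Real.hasDerivAt_sqrt hq0).comp 0 hq
  have hfun : (fun t : ℝ => Real.sqrt (‖y‖^2 + 2*⟪y,v⟫*t + ‖v‖^2*t^2))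
      = fun t : ℝ => ‖y + t • v‖ := by
    funext t
    rw [norm_eq_sqrt_real_inner (y + t • v), real_inner_add_add_self,
      real_inner_smul_right, real_inner_smul_left, real_inner_smul_right,
      real_inner_self_eq_norm_sq, real_inner_self_eq_norm_sq]
    ring_nf
  rw [show ((fun x => Real.sqrt x) ∘ fun t : ℝ => ‖y‖^2 + 2*⟪y,v⟫*t + ‖v‖^2*t^2)
      = fun t : ℝ => Real.sqrt (‖y‖^2 + 2*⟪y,v⟫*t + ‖v‖^2*t^2) from rfl, hfun] at hs
  refine hs.congr_deriv ?_
  rw [show ‖y‖^2 + 2*⟪y,v⟫*(0:ℝ) + ‖v‖^2*(0:ℝ)^2 = ‖y‖^2 by ring,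
    Real.sqrt_sq (norm_nonneg y)]
  field_simp

private lemma aux_s_hasDeriv {E : Type*} [NormedAddCommGroup E] [InnerProductSpace ℝ E]
    (x y v : E) (hy : y ≠ 0) :
    HasDerivAt (fun t : ℝ => ⟪x, y + t • v⟫ / ‖y + t • v‖)
      ((⟪x,v⟫ * ‖y‖ - ⟪x,y⟫ * (⟪y,v⟫ / ‖y‖)) / ‖y‖^2) 0 := by
  have hy' : (0:ℝ) < ‖y‖ := norm_pos_iff.mpr hy
  have hnum : HasDerivAt (fun t : ℝ => ⟪x, y + t • v⟫) ⟪x,v⟫ 0 := by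
    have : (fun t : ℝ => ⟪x, y + t • v⟫) = fun t : ℝ => ⟪x,y⟫ + t * ⟪x,v⟫ := by
      funext t; rw [inner_add_right, real_inner_smul_right]
    rw [this]
    simpa using ((hasDerivAt_id (0:ℝ)).mul_const ⟪x,v⟫).const_add ⟪x,y⟫
  have h := hnum.div (aux_norm_hasDeriv y v hy) (by simpa using hy'.ne')
  simp at h
  exact h

private lemma aux_G_deriv {E : Type*} [NormedAddCommGroup E] [InnerProductSpace ℝ E]
    (P Q : ℝ → ℝ → ℝ) (r : ℝ) (hPd : Differentiable ℝ (P r)) (hQd : Differentiable ℝ (Q r))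
    (x y v : E) (hy : y ≠ 0) (a cc : ℝ) :
    deriv (fun t : ℝ => ‖y + t • v‖ * P r (⟪x, y + t • v⟫ / ‖y + t • v‖) * (a + t)
        + ‖y + t • v‖^2 * Q r (⟪x, y + t • v⟫ / ‖y + t • v‖) * cc) 0
    = (⟪y,v⟫/‖y‖ * P r (⟪x,y⟫/‖y‖)
        + ‖y‖ * (deriv (P r) (⟪x,y⟫/‖y‖) * ((⟪x,v⟫ * ‖y‖ - ⟪x,y⟫ * (⟪y,v⟫ / ‖y‖)) / ‖y‖^2))) * a
      + ‖y‖ * P r (⟪x,y⟫/‖y‖)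
      + (2*‖y‖*(⟪y,v⟫/‖y‖) * Q r (⟪x,y⟫/‖y‖)
        + ‖y‖^2 * (deriv (Q r) (⟪x,y⟫/‖y‖) * ((⟪x,v⟫ * ‖y‖ - ⟪x,y⟫ * (⟪y,v⟫ / ‖y‖)) / ‖y‖^2))) * cc := by
  have hnorm := aux_norm_hasDeriv y v hy
  have hs := aux_s_hasDeriv x y v hy
  set s0 : ℝ := ⟪x,y⟫/‖y‖ with hs0
  set sd : ℝ := (⟪x,v⟫ * ‖y‖ - ⟪x,y⟫ * (⟪y,v⟫ / ‖y‖)) / ‖y‖^2 with hsd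
  have e0 : (fun t : ℝ => ⟪x, y + t • v⟫ / ‖y + t • v‖) 0 = s0 := by simp [hs0]
  have hP0 : HasDerivAt (P r) (deriv (P r) s0) s0 := (hPd s0).hasDerivAt
  have hQ0 : HasDerivAt (Q r) (deriv (Q r) s0) s0 := (hQd s0).hasDerivAt
  rw [← e0] at hP0 hQ0
  have hPcomp := HasDerivAt.comp (0:ℝ) hP0 hs
  have hQcomp := HasDerivAt.comp (0:ℝ) hQ0 hs
  rw [Function.comp_def] at hPcomp hQcomp
  have h1 := (hnorm.mul hPcomp).mul ((hasDerivAt_id (0:ℝ)).const_add a)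
  have h2 := ((hnorm.pow 2).mul hQcomp).mul_const cc
  have htot := (h1.add h2).deriv
  simp only [id_eq, zero_smul, add_zero, e0, mul_one, pow_one, Nat.cast_ofNat] at htot
  refine htot.trans ?_
  simp only [Pi.mul_apply, Pi.pow_apply, Pi.add_apply, zero_smul, add_zero, ← hs0, ← hsd,
    Nat.reduceSub, pow_one]

private lemma aux_log_deriv {E : Type*} [NormedAddCommGroup E] [InnerProductSpace ℝ E]
    (σ : ℝ → ℝ) (x v : E) (hx : x ≠ 0)
    (hσd : DifferentiableAt ℝ σ ‖x‖) (hσ0 : σ ‖x‖ ≠ 0) :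
    deriv (fun t : ℝ => Real.log (σ ‖x + t • v‖)) 0
      = deriv σ ‖x‖ * (⟪x,v⟫ / ‖x‖) / σ ‖x‖ := by
  have hnorm := aux_norm_hasDeriv x v hx
  have e0 : (fun t : ℝ => ‖x + t • v‖) 0 = ‖x‖ := by simp
  have hσ : HasDerivAt σ (deriv σ ‖x‖) ‖x‖ := hσd.hasDerivAt
  rw [← e0] at hσ
  have hcomp := HasDerivAt.comp (0:ℝ) hσ hnorm
  rw [Function.comp_def] at hcomp
  have hne : σ ‖x + (0:ℝ) • v‖ ≠ 0 := by simpa using hσ0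
  have hfin := (hcomp.log hne).deriv
  simp only [zero_smul, add_zero] at hfin
  rw [hfin]

private lemma aux_key (n : ℕ) (P Q : ℝ → ℝ → ℝ) (σ : ℝ → ℝ)
    (x y : EuclideanSpace ℝ (Fin n)) (hx : x ≠ 0) (hy : y ≠ 0)
    (hPd : Differentiable ℝ (P ‖x‖)) (hQd : Differentiable ℝ (Q ‖x‖))
    (hσd : DifferentiableAt ℝ σ ‖x‖) (hσ0 : σ ‖x‖ ≠ 0) :
    (∑ m, deriv (fun t : ℝ =>
        ‖y + t • EuclideanSpace.single m (1:ℝ)‖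
          * P ‖x‖ (⟪x, y + t • EuclideanSpace.single m (1:ℝ)⟫ / ‖y + t • EuclideanSpace.single m (1:ℝ)‖)
          * (y + t • EuclideanSpace.single m (1:ℝ)) m
        + ‖y + t • EuclideanSpace.single m (1:ℝ)‖ ^ 2
          * Q ‖x‖ (⟪x, y + t • EuclideanSpace.single m (1:ℝ)⟫ / ‖y + t • EuclideanSpace.single m (1:ℝ)‖)
          * x m) 0)
      - (∑ m, y m * deriv (fun t : ℝ => Real.log (σ ‖x + t • EuclideanSpace.single m (1:ℝ)‖)) 0)
    = ‖y‖ * ((n + 1) * P ‖x‖ (⟪x,y⟫/‖y‖)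
        + (‖x‖ ^ 2 - (⟪x,y⟫/‖y‖) ^ 2) * deriv (Q ‖x‖) (⟪x,y⟫/‖y‖)
        + 2 * (⟪x,y⟫/‖y‖) * Q ‖x‖ (⟪x,y⟫/‖y‖)
        + (-(deriv σ ‖x‖) / (‖x‖ * σ ‖x‖)) * (⟪x,y⟫/‖y‖)) := by
  have hu : (0:ℝ) < ‖y‖ := norm_pos_iff.mpr hy
  have hr : (0:ℝ) < ‖x‖ := norm_pos_iff.mpr hx
  have hiy : ∀ m, ⟪y, EuclideanSpace.single m (1:ℝ)⟫ = y m := by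
    intro m; simp [EuclideanSpace.inner_single_right]
  have hix : ∀ m, ⟪x, EuclideanSpace.single m (1:ℝ)⟫ = x m := by
    intro m; simp [EuclideanSpace.inner_single_right]
  set u : ℝ := ‖y‖ with hu'
  set r : ℝ := ‖x‖ with hr'
  set ip : ℝ := ⟪x,y⟫ with hip
  set Pv : ℝ := P r (ip/u) with hPv
  set Qv : ℝ := Q r (ip/u) with hQv
  set pd : ℝ := deriv (P r) (ip/u) with hpd
  set qd : ℝ := deriv (Q r) (ip/u) with hqd
  have hyy : ∑ m, y m * y m = u ^ 2 := by
    rw [hu', ← real_inner_self_eq_norm_sq, PiLp.inner_apply]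
    simp [RCLike.inner_apply, sq]
  have hxx : ∑ m, x m * x m = r ^ 2 := by
    rw [hr', ← real_inner_self_eq_norm_sq, PiLp.inner_apply]
    simp [RCLike.inner_apply, sq]
  have hxy : ∑ m, x m * y m = ip := by
    rw [hip, PiLp.inner_apply]
    simp [RCLike.inner_apply, mul_comm]
  have h1 : ∀ m, deriv (fun t : ℝ =>
        ‖y + t • EuclideanSpace.single m (1:ℝ)‖
          * P ‖x‖ (⟪x, y + t • EuclideanSpace.single m (1:ℝ)⟫ / ‖y + t • EuclideanSpace.single m (1:ℝ)‖)
          * (y + t • EuclideanSpace.single m (1:ℝ)) m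
        + ‖y + t • EuclideanSpace.single m (1:ℝ)‖ ^ 2
          * Q ‖x‖ (⟪x, y + t • EuclideanSpace.single m (1:ℝ)⟫ / ‖y + t • EuclideanSpace.single m (1:ℝ)‖)
          * x m) 0
      = (Pv/u - ip*pd/u^2) * (y m * y m) + (pd + 2*Qv - ip*qd/u) * (x m * y m)
        + (u*qd) * (x m * x m) + u*Pv := by
    intro m
    have hcoord : ∀ t : ℝ, (y + t • EuclideanSpace.single m (1:ℝ)) m = y m + t := by
      intro t
      simp [EuclideanSpace.single_apply]
    have hfun : (fun t : ℝ =>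
        ‖y + t • EuclideanSpace.single m (1:ℝ)‖
          * P ‖x‖ (⟪x, y + t • EuclideanSpace.single m (1:ℝ)⟫ / ‖y + t • EuclideanSpace.single m (1:ℝ)‖)
          * (y + t • EuclideanSpace.single m (1:ℝ)) m
        + ‖y + t • EuclideanSpace.single m (1:ℝ)‖ ^ 2
          * Q ‖x‖ (⟪x, y + t • EuclideanSpace.single m (1:ℝ)⟫ / ‖y + t • EuclideanSpace.single m (1:ℝ)‖)
          * x m)
      = (fun t : ℝ =>
        ‖y + t • EuclideanSpace.single m (1:ℝ)‖
          * P ‖x‖ (⟪x, y + t • EuclideanSpace.single m (1:ℝ)⟫ / ‖y + t • EuclideanSpace.single m (1:ℝ)‖)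
          * (y m + t)
        + ‖y + t • EuclideanSpace.single m (1:ℝ)‖ ^ 2
          * Q ‖x‖ (⟪x, y + t • EuclideanSpace.single m (1:ℝ)⟫ / ‖y + t • EuclideanSpace.single m (1:ℝ)‖)
          * x m) := by
      funext t; rw [hcoord]
    rw [hfun, aux_G_deriv P Q ‖x‖ hPd hQd x y (EuclideanSpace.single m (1:ℝ)) hy (y m) (x m),
      hiy, hix]
    rw [← hu', ← hr', ← hip, ← hPv, ← hQv, ← hpd, ← hqd]
    field_simp
    ring
  have h2 : ∀ m, deriv (fun t : ℝ => Real.log (σ ‖x + t • EuclideanSpace.single m (1:ℝ)‖)) 0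
      = (deriv σ r / (r * σ r)) * x m := by
    intro m
    rw [aux_log_deriv σ x (EuclideanSpace.single m (1:ℝ)) hx hσd hσ0, hix, ← hr']
    field_simp
  calc (∑ m, deriv (fun t : ℝ =>
        ‖y + t • EuclideanSpace.single m (1:ℝ)‖
          * P ‖x‖ (⟪x, y + t • EuclideanSpace.single m (1:ℝ)⟫ / ‖y + t • EuclideanSpace.single m (1:ℝ)‖)
          * (y + t • EuclideanSpace.single m (1:ℝ)) m
        + ‖y + t • EuclideanSpace.single m (1:ℝ)‖ ^ 2
          * Q ‖x‖ (⟪x, y + t • EuclideanSpace.single m (1:ℝ)⟫ / ‖y + t • EuclideanSpace.single m (1:ℝ)‖)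
          * x m) 0)
      - (∑ m, y m * deriv (fun t : ℝ => Real.log (σ ‖x + t • EuclideanSpace.single m (1:ℝ)‖)) 0)
      = (∑ m, ((Pv/u - ip*pd/u^2) * (y m * y m) + (pd + 2*Qv - ip*qd/u) * (x m * y m)
          + (u*qd) * (x m * x m) + u*Pv))
        - (∑ m, y m * ((deriv σ r / (r * σ r)) * x m)) := by
        congr 1
        · exact Finset.sum_congr rfl (fun m _ => h1 m)
        · exact Finset.sum_congr rfl (fun m _ => by rw [h2 m])
    _ = ((Pv/u - ip*pd/u^2) * u^2 + (pd + 2*Qv - ip*qd/u) * ip + (u*qd) * r^2 + n*(u*Pv))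
        - (deriv σ r / (r * σ r)) * ip := by
        simp only [Finset.sum_add_distrib, ← Finset.mul_sum, hyy, hxx, hxy,
          Finset.sum_const, Finset.card_univ, Fintype.card_fin, nsmul_eq_mul]
        rw [show ∑ m, y m * ((deriv σ r / (r * σ r)) * x m)
            = (deriv σ r / (r * σ r)) * ∑ m, x m * y m from by
              rw [Finset.mul_sum]; apply Finset.sum_congr rfl; intros; ring,
          hxy]
        ring
    _ = u * ((n + 1) * Pv + (r ^ 2 - (ip/u) ^ 2) * qd + 2 * (ip/u) * Qv
          + (-(deriv σ r) / (r * σ r)) * (ip/u)) := by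
        field_simp
        ring

/-- Theorem 2.4: a spherically symmetric Finsler metric `F = u φ(r,s)` with spray
coefficients `G^i = u P y^i + u² Q x^i` has isotropic S-curvature
`S = (n+1) c(|x|) F` with respect to the spherically symmetric volume form `σ(|x|)dx`
on the punctured ball of radius `R` if and only if
`(n+1)P + (r²-s²)Q_s + 2sQ + f(r)s = (n+1) c(r) φ(r,s)` for all `0 < r < R`, `|s| ≤ r`. -/
theorem spherically_symmetric_isotropic_S_curvature_characterization
    (n : ℕ) (hn : 2 ≤ n) (R : ℝ) (hR : 0 < R)
    (φ P Q : ℝ → ℝ → ℝ) (σ c : ℝ → ℝ)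
    (hφpos : ∀ r > (0:ℝ), ∀ s : ℝ, 0 < φ r s)
    (hP : ∀ r > (0:ℝ), Differentiable ℝ (P r))
    (hQ : ∀ r > (0:ℝ), Differentiable ℝ (Q r))
    (hσpos : ∀ r ∈ Set.Ioo (0:ℝ) R, 0 < σ r)
    (hσdiff : ∀ r ∈ Set.Ioo (0:ℝ) R, DifferentiableAt ℝ σ r) :
    let G : Fin n → EuclideanSpace ℝ (Fin n) → EuclideanSpace ℝ (Fin n) → ℝ :=
      fun i x y => ‖y‖ * P ‖x‖ (⟪x, y⟫ / ‖y‖) * y i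
        + ‖y‖ ^ 2 * Q ‖x‖ (⟪x, y⟫ / ‖y‖) * x i
    let S : EuclideanSpace ℝ (Fin n) → EuclideanSpace ℝ (Fin n) → ℝ :=
      fun x y =>
        (∑ m, deriv (fun t : ℝ => G m x (y + t • EuclideanSpace.single m (1:ℝ))) 0)
          - (∑ m, y m *
              deriv (fun t : ℝ => Real.log (σ ‖x + t • EuclideanSpace.single m (1:ℝ)‖)) 0)
    let f : ℝ → ℝ := fun r => -(deriv σ r) / (r * σ r)
    ((∀ x y : EuclideanSpace ℝ (Fin n), 0 < ‖x‖ → ‖x‖ < R → y ≠ 0 →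
        S x y = (n + 1) * c ‖x‖ * (‖y‖ * φ ‖x‖ (⟪x, y⟫ / ‖y‖)))
      ↔ (∀ r ∈ Set.Ioo (0:ℝ) R, ∀ s ∈ Set.Icc (-r) r,
          (n + 1) * P r s + (r ^ 2 - s ^ 2) * deriv (Q r) s + 2 * s * Q r s + f r * s
            = (n + 1) * c r * φ r s)) := by
  intro G S f
  have hSeq : ∀ x y : EuclideanSpace ℝ (Fin n), 0 < ‖x‖ → ‖x‖ < R → y ≠ 0 →
      S x y = ‖y‖ * ((n + 1) * P ‖x‖ (⟪x,y⟫/‖y‖)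
        + (‖x‖ ^ 2 - (⟪x,y⟫/‖y‖) ^ 2) * deriv (Q ‖x‖) (⟪x,y⟫/‖y‖)
        + 2 * (⟪x,y⟫/‖y‖) * Q ‖x‖ (⟪x,y⟫/‖y‖)
        + f ‖x‖ * (⟪x,y⟫/‖y‖)) := by
    intro x y hx hxR hy
    have hxne : x ≠ 0 := norm_pos_iff.mp hx
    simp only [S, G, f]
    exact aux_key n P Q σ x y hxne hy (hP _ hx) (hQ _ hx)
      (hσdiff _ ⟨hx, hxR⟩) (hσpos _ ⟨hx, hxR⟩).ne'
  constructor
  · intro h r hr s hs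
    obtain ⟨hr0, hrR⟩ := hr
    obtain ⟨hs1, hs2⟩ := hs
    have hsr : s^2 ≤ r^2 := sq_le_sq' hs1 hs2
    set i0 : Fin n := ⟨0, by omega⟩ with hi0
    set i1 : Fin n := ⟨1, by omega⟩ with hi1
    have hne : i1 ≠ i0 := by simp [hi0, hi1, Fin.ext_iff]
    set w : ℝ := Real.sqrt (r^2 - s^2) with hw
    have hw2 : w * w = r^2 - s^2 := Real.mul_self_sqrt (by linarith)
    set X : EuclideanSpace ℝ (Fin n) := EuclideanSpace.single i0 r with hX
    set Y : EuclideanSpace ℝ (Fin n) := EuclideanSpace.single i0 s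
      + EuclideanSpace.single i1 w with hY
    have hXnorm : ‖X‖ = r := by
      rw [hX, EuclideanSpace.norm_single, Real.norm_eq_abs, abs_of_pos hr0]
    have hYY : ⟪Y,Y⟫ = r^2 := by
      rw [hY, real_inner_add_add_self]
      simp [EuclideanSpace.inner_single_right, EuclideanSpace.single_apply, hne]
      nlinarith [hw2]
    have hYnorm : ‖Y‖ = r := by
      rw [norm_eq_sqrt_real_inner, hYY, Real.sqrt_sq hr0.le]
    have hYne : Y ≠ 0 := by
      intro h0
      rw [h0] at hYnorm
      simp at hYnorm
      linarith
    have hXY : ⟪X,Y⟫ = r * s := by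
      rw [hX, hY]
      simp only [inner_add_right, EuclideanSpace.inner_single_left,
        EuclideanSpace.single_apply]
      simp [hne, Ne.symm hne]
    have hs0 : ⟪X,Y⟫ / ‖Y‖ = s := by
      rw [hXY, hYnorm]
      field_simp
    have h1 := hSeq X Y (by rw [hXnorm]; exact hr0) (by rw [hXnorm]; exact hrR) hYne
    have h2 := h X Y (by rw [hXnorm]; exact hr0) (by rw [hXnorm]; exact hrR) hYne
    rw [h1] at h2
    rw [hs0, hXnorm, hYnorm] at h2
    have h4 : (↑n + 1) * c r * (r * φ r s) = r * ((↑n + 1) * c r * φ r s) := by ring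
    rw [h4] at h2
    linarith [mul_left_cancel₀ hr0.ne' h2]
  · intro h x y hx hxR hy
    have h1 := hSeq x y hx hxR hy
    have hu : (0:ℝ) < ‖y‖ := norm_pos_iff.mpr hy
    have habs : |⟪x,y⟫ / ‖y‖| ≤ ‖x‖ := by
      rw [abs_div, abs_of_pos hu, div_le_iff₀ hu]
      exact abs_real_inner_le_norm x y
    have h2 := h ‖x‖ ⟨hx, hxR⟩ (⟪x,y⟫/‖y‖) (abs_le.mp habs)
    rw [h1, h2]
    ring
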